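/- If γ* solves the entropy-regularized optimal transport problem min_{γ ∈ Ω} ⟨γ, M⟩_F + λ Σ_{ij} γ_{ij} log γ_{ij} with λ > 0, where Ω is the transportation polytope with marginals μ and ν (all entries of μ, ν strictly positive), then γ* is unique and has the form γ*_{ij} = u_i exp(−M_{ij}/λ) v_j for some strictly positive vectors u ∈ ℝ^{n_s}, v ∈ ℝ^{n_t}. -/

import Mathlib

open Finset

lemma mul_log_cvx {x y s t : ℝ} (hx : 0 ≤ x) (hy : 0 ≤ y) (hs : 0 ≤ s) (ht : 0 ≤ t)
    (hst : s + t = 1) : (s*x + t*y) * Real.log (s*x + t*y) ≤ s*(x*Real.log x) + t*(y*Real.log y) := by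
  have := Real.convexOn_mul_log.2 (Set.mem_Ici.2 hx) (Set.mem_Ici.2 hy) hs ht hst
  simpa [smul_eq_mul] using this

lemma mul_log_scvx {x y s t : ℝ} (hx : 0 ≤ x) (hy : 0 ≤ y) (hxy : x ≠ y) (hs : 0 < s) (ht : 0 < t)
    (hst : s + t = 1) : (s*x + t*y) * Real.log (s*x + t*y) < s*(x*Real.log x) + t*(y*Real.log y) := by
  have := Real.strictConvexOn_mul_log.2 (Set.mem_Ici.2 hx) (Set.mem_Ici.2 hy) hxy hs ht hst
  simpa [smul_eq_mul] using this

lemma ind_sum {n : ℕ} (i i' : Fin n) (f : Fin n → ℝ) :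
    ∑ p, ((if p = i then (1:ℝ) else 0) - (if p = i' then 1 else 0)) * f p = f i - f i' := by
  simp [sub_mul, Finset.sum_sub_distrib, ite_mul]

set_option maxHeartbeats 1000000 in
/-- Sinkhorn characterization: a minimizer `γ*` of the
entropy-regularized OT problem over the transportation polytope `Ω` (with
strictly positive marginals `μ, ν`) is the unique minimizer and has the scaling
form `γ*_{ij} = u_i exp(−M_{ij}/λ) v_j` with strictly positive `u, v`. -/
theorem entropic_OT_sinkhorn_form (ns nt : ℕ)
    (M : Matrix (Fin ns) (Fin nt) ℝ) (lam : ℝ) (hlam : 0 < lam)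
    (μ : Fin ns → ℝ) (ν : Fin nt → ℝ)
    (hμ : ∀ i, 0 < μ i) (hν : ∀ j, 0 < ν j)
    (hμ1 : ∑ i, μ i = 1) (hν1 : ∑ j, ν j = 1)
    (Ω : Set (Matrix (Fin ns) (Fin nt) ℝ))
    (hΩ : Ω = {γ | (∀ i j, 0 ≤ γ i j) ∧ (∀ i, ∑ j, γ i j = μ i) ∧
      (∀ j, ∑ i, γ i j = ν j)})
    (obj : Matrix (Fin ns) (Fin nt) ℝ → ℝ)
    (hobj : obj = fun γ => (∑ i, ∑ j, γ i j * M i j) +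
      lam * ∑ i, ∑ j, γ i j * Real.log (γ i j))
    (γstar : Matrix (Fin ns) (Fin nt) ℝ) (hγstar : γstar ∈ Ω)
    (hmin : ∀ γ ∈ Ω, obj γstar ≤ obj γ) :
    (∀ γ' ∈ Ω, (∀ γ ∈ Ω, obj γ' ≤ obj γ) → γ' = γstar) ∧
      ∃ (u : Fin ns → ℝ) (v : Fin nt → ℝ),
        (∀ i, 0 < u i) ∧ (∀ j, 0 < v j) ∧
          ∀ i j, γstar i j = u i * Real.exp (-M i j / lam) * v j := by
  subst hΩ hobj
  obtain ⟨hpos0, hrow, hcol⟩ := hγstar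
  -- nonemptiness
  have hns : 0 < ns := by
    rcases Nat.eq_zero_or_pos ns with h | h
    · subst h; simp at hμ1
    · exact h
  have hnt : 0 < nt := by
    rcases Nat.eq_zero_or_pos nt with h | h
    · subst h; simp at hν1
    · exact h
  set i0 : Fin ns := ⟨0, hns⟩
  set j0 : Fin nt := ⟨0, hnt⟩
  -- STEP A: positivity of all entries of γstar
  have hpos : ∀ a b, 0 < γstar a b := by
    intro a b
    rcases (hpos0 a b).lt_or_eq with h | h
    · exact h
    exfalso
    set ρ : Matrix (Fin ns) (Fin nt) ℝ := fun i j => μ i * ν j with hρ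
    have hρΩ : ρ ∈ {γ : Matrix (Fin ns) (Fin nt) ℝ | (∀ i j, 0 ≤ γ i j) ∧
        (∀ i, ∑ j, γ i j = μ i) ∧ (∀ j, ∑ i, γ i j = ν j)} := by
      refine ⟨fun i j => le_of_lt (mul_pos (hμ i) (hν j)), fun i => ?_, fun j => ?_⟩
      · rw [← Finset.mul_sum, hν1, mul_one]
      · simp only [hρ]
        rw [← Finset.sum_mul, hμ1, one_mul]
    set r : ℝ := μ a * ν b with hr
    have hrpos : 0 < r := mul_pos (hμ a) (hν b)
    set obj : Matrix (Fin ns) (Fin nt) ℝ → ℝ := fun γ => (∑ i, ∑ j, γ i j * M i j) +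
      lam * ∑ i, ∑ j, γ i j * Real.log (γ i j) with hobj
    set D : ℝ := obj ρ - obj γstar with hD
    set t : ℝ := min (1/2) (Real.exp (-(D+1)/(lam*r))) with ht
    have ht0 : 0 < t := lt_min (by norm_num) (Real.exp_pos _)
    have ht1 : t < 1 := lt_of_le_of_lt (min_le_left _ _) (by norm_num)
    have hlogt : lam * r * Real.log t ≤ -(D+1) := by
      have h1 : Real.log t ≤ -(D+1)/(lam*r) := by
        have := (Real.log_le_iff_le_exp ht0).2 (min_le_right (1/2) (Real.exp (-(D+1)/(lam*r))))
        exact this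
      calc lam * r * Real.log t ≤ lam * r * (-(D+1)/(lam*r)) := by
            exact mul_le_mul_of_nonneg_left h1 (le_of_lt (mul_pos hlam hrpos))
        _ = -(D+1) := by field_simp
    set γt : Matrix (Fin ns) (Fin nt) ℝ := fun i j => (1-t) * γstar i j + t * ρ i j with hγt
    have hγtΩ : γt ∈ {γ : Matrix (Fin ns) (Fin nt) ℝ | (∀ i j, 0 ≤ γ i j) ∧
        (∀ i, ∑ j, γ i j = μ i) ∧ (∀ j, ∑ i, γ i j = ν j)} := by
      refine ⟨fun i j => ?_, fun i => ?_, fun j => ?_⟩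
      · have := hpos0 i j
        have := le_of_lt (mul_pos (hμ i) (hν j))
        have h1t : (0:ℝ) ≤ 1 - t := by linarith
        positivity
      · simp only [hγt, Finset.sum_add_distrib, ← Finset.mul_sum, hrow i, hρΩ.2.1 i]; ring
      · simp only [hγt, Finset.sum_add_distrib, ← Finset.mul_sum, hcol j, hρΩ.2.2 j]; ring
    -- entropy bound
    have hterm : ∀ p : Fin ns × Fin nt,
        γt p.1 p.2 * Real.log (γt p.1 p.2) ≤
        (1-t) * (γstar p.1 p.2 * Real.log (γstar p.1 p.2)) + t * (ρ p.1 p.2 * Real.log (ρ p.1 p.2))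
          + (if p = (a, b) then t * r * Real.log t else 0) := by
      rintro ⟨i, j⟩
      by_cases hp : (i, j) = (a, b)
      · obtain ⟨rfl, rfl⟩ : i = a ∧ j = b := Prod.mk.injEq .. ▸ hp
        simp only [if_pos hp]
        have hγab : γstar i j = 0 := h.symm
        have : γt i j = t * r := by simp [hγt, hγab, hρ, hr]
        rw [this, hγab]
        rw [Real.log_mul (ne_of_gt ht0) (ne_of_gt hrpos)]
        simp only [if_true, zero_mul, mul_zero, add_zero, zero_add, ← hr]
        exact le_of_eq (by ring)
      · simp only [if_neg hp, add_zero]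
        exact mul_log_cvx (hpos0 i j) (le_of_lt (mul_pos (hμ i) (hν j)))
          (by linarith) (le_of_lt ht0) (by ring)
    have hent : ∑ i, ∑ j, γt i j * Real.log (γt i j) ≤
        (1-t) * (∑ i, ∑ j, γstar i j * Real.log (γstar i j)) +
        t * (∑ i, ∑ j, ρ i j * Real.log (ρ i j)) + t * r * Real.log t := by
      rw [← Finset.sum_product' (s := univ) (t := univ),
          ← Finset.sum_product' (s := univ) (t := univ),
          ← Finset.sum_product' (s := univ) (t := univ)]
      calc ∑ p : Fin ns × Fin nt, γt p.1 p.2 * Real.log (γt p.1 p.2)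
          ≤ ∑ p : Fin ns × Fin nt, ((1-t) * (γstar p.1 p.2 * Real.log (γstar p.1 p.2)) +
            t * (ρ p.1 p.2 * Real.log (ρ p.1 p.2)) +
            (if p = (a, b) then t * r * Real.log t else 0)) :=
            Finset.sum_le_sum (fun p _ => hterm p)
        _ = _ := by
            rw [Finset.sum_add_distrib, Finset.sum_add_distrib, Finset.sum_ite_eq' univ (a,b)]
            simp [← Finset.mul_sum]
    have hlin : ∑ i, ∑ j, γt i j * M i j =
        (1-t) * (∑ i, ∑ j, γstar i j * M i j) + t * (∑ i, ∑ j, ρ i j * M i j) := by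
      simp [hγt, add_mul, Finset.sum_add_distrib, Finset.mul_sum, mul_assoc]
    have hobjt : obj γt ≤ obj γstar + t * D + lam * (t * r * Real.log t) := by
      have : obj γt ≤ (1-t) * obj γstar + t * obj ρ + lam * (t * r * Real.log t) := by
        simp only [hobj]
        rw [hlin]
        nlinarith [hent]
      calc obj γt ≤ (1-t) * obj γstar + t * obj ρ + lam * (t * r * Real.log t) := this
        _ = obj γstar + t * D + lam * (t * r * Real.log t) := by rw [hD]; ring
    have hfin : obj γt < obj γstar := by
      have h2 : lam * (t * r * Real.log t) ≤ t * (-(D+1)) := by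
        have := mul_le_mul_of_nonneg_left hlogt (le_of_lt ht0)
        nlinarith
      calc obj γt ≤ obj γstar + t * D + lam * (t * r * Real.log t) := hobjt
        _ ≤ obj γstar + t * D + t * (-(D+1)) := by linarith
        _ = obj γstar - t := by ring
        _ < obj γstar := by linarith
    exact absurd (hmin γt hγtΩ) (not_le.2 hfin)
  -- STEP B: cycle condition
  have hne : (Finset.univ : Finset (Fin ns × Fin nt)).Nonempty := ⟨(i0, j0), Finset.mem_univ _⟩
  set ε : ℝ := Finset.univ.inf' hne (fun p : Fin ns × Fin nt => γstar p.1 p.2) with hε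
  have hε0 : 0 < ε := by
    rw [hε, Finset.lt_inf'_iff]
    exact fun p _ => hpos p.1 p.2
  have hεle : ∀ p q, ε ≤ γstar p q := fun p q => Finset.inf'_le _ (Finset.mem_univ (p, q))
  have hcyc : ∀ i i' j j',
      (M i j + lam * Real.log (γstar i j)) + (M i' j' + lam * Real.log (γstar i' j')) =
      (M i j' + lam * Real.log (γstar i j')) + (M i' j + lam * Real.log (γstar i' j)) := by
    intro i i' j j'
    by_cases hii : i = i'
    · subst hii; ring
    by_cases hjj : j = j'
    · subst hjj; ring
    set d1 : Fin ns → ℝ := fun p => (if p = i then 1 else 0) - (if p = i' then 1 else 0) with hd1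
    set d2 : Fin nt → ℝ := fun q => (if q = j then 1 else 0) - (if q = j' then 1 else 0) with hd2
    have hd1abs : ∀ p, |d1 p| ≤ 1 := by
      intro p; simp only [hd1]; split_ifs <;> norm_num
    have hd2abs : ∀ q, |d2 q| ≤ 1 := by
      intro q; simp only [hd2]; split_ifs <;> norm_num
    have hd2sum : ∑ q, d2 q = 0 := by simp [hd2, Finset.sum_sub_distrib]
    set F : ℝ → ℝ := fun s => (∑ p, ∑ q, (γstar p q + d1 p * d2 q * s) * M p q) +
      lam * ∑ p, ∑ q, (γstar p q + d1 p * d2 q * s) *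
        Real.log (γstar p q + d1 p * d2 q * s) with hF
    have hlin : ∀ (p : Fin ns) (q : Fin nt),
        HasDerivAt (fun s : ℝ => γstar p q + d1 p * d2 q * s) (d1 p * d2 q) 0 := by
      intro p q
      simpa using ((hasDerivAt_id (0:ℝ)).const_mul (d1 p * d2 q)).const_add (γstar p q)
    have hentpq : ∀ (p : Fin ns) (q : Fin nt),
        HasDerivAt (fun s : ℝ => (γstar p q + d1 p * d2 q * s) *
          Real.log (γstar p q + d1 p * d2 q * s))
          ((Real.log (γstar p q) + 1) * (d1 p * d2 q)) 0 := by
      intro p q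
      have h1 : HasDerivAt (fun x : ℝ => x * Real.log x) (Real.log (γstar p q) + 1)
          ((fun s : ℝ => γstar p q + d1 p * d2 q * s) 0) := by
        simpa using Real.hasDerivAt_mul_log (ne_of_gt (hpos p q))
      exact h1.comp 0 (hlin p q)
    have hderiv : HasDerivAt F
        ((∑ p, ∑ q, d1 p * d2 q * M p q) +
          lam * ∑ p, ∑ q, (Real.log (γstar p q) + 1) * (d1 p * d2 q)) 0 := by
      apply HasDerivAt.add
      · apply HasDerivAt.fun_sum
        intro p _
        apply HasDerivAt.fun_sum
        intro q _
        exact (hlin p q).mul_const (M p q)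
      · apply HasDerivAt.const_mul
        apply HasDerivAt.fun_sum
        intro p _
        apply HasDerivAt.fun_sum
        intro q _
        exact hentpq p q
    have hlocmin : IsLocalMin F 0 := by
      have hb : Metric.ball (0:ℝ) ε ∈ nhds 0 := Metric.ball_mem_nhds 0 hε0
      refine Filter.eventually_of_mem hb ?_
      intro s hs
      have hsabs : |s| < ε := by simpa [Real.dist_eq] using hs
      have hmem : (fun p q => γstar p q + d1 p * d2 q * s) ∈
          {γ : Matrix (Fin ns) (Fin nt) ℝ | (∀ i j, 0 ≤ γ i j) ∧
            (∀ i, ∑ j, γ i j = μ i) ∧ (∀ j, ∑ i, γ i j = ν j)} := by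
        refine ⟨fun p q => ?_, fun p => ?_, fun q => ?_⟩
        · have h1 : |d1 p * d2 q * s| ≤ |s| := by
            rw [abs_mul, abs_mul]
            have hm := mul_le_mul (hd1abs p) (hd2abs q) (abs_nonneg _) zero_le_one
            nlinarith [abs_nonneg s, abs_nonneg (d1 p), abs_nonneg (d2 q)]
          have h2 := hεle p q
          have h3 := neg_abs_le (d1 p * d2 q * s)
          show (0:ℝ) ≤ γstar p q + d1 p * d2 q * s
          linarith
        · have h4 : ∑ q, d1 p * d2 q * s = (d1 p * s) * ∑ q, d2 q := by
            rw [Finset.mul_sum]; exact Finset.sum_congr rfl (fun q _ => by ring)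
          rw [Finset.sum_add_distrib, h4, hd2sum, mul_zero, add_zero, hrow p]
        · have hd1sum : ∑ p, d1 p = 0 := by simp [hd1, Finset.sum_sub_distrib]
          have h4 : ∑ p, d1 p * d2 q * s = (d2 q * s) * ∑ p, d1 p := by
            rw [Finset.mul_sum]; exact Finset.sum_congr rfl (fun p _ => by ring)
          rw [Finset.sum_add_distrib, h4, hd1sum, mul_zero, add_zero, hcol q]
      have h5 := hmin _ hmem
      simp only at h5
      have hF0 : F 0 = (∑ p, ∑ q, γstar p q * M p q) +
          lam * ∑ p, ∑ q, γstar p q * Real.log (γstar p q) := by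
        simp [hF]
      rw [hF0]
      exact h5
    have h0 := hlocmin.hasDerivAt_eq_zero hderiv
    have e1 : ∀ (A : Fin ns → Fin nt → ℝ),
        ∑ p, ∑ q, d1 p * d2 q * A p q = A i j - A i j' - (A i' j - A i' j') := by
      intro A
      have inner : ∀ p, ∑ q, d1 p * d2 q * A p q = d1 p * (A p j - A p j') := by
        intro p
        have : ∑ q, d1 p * d2 q * A p q = d1 p * ∑ q, d2 q * A p q := by
          rw [Finset.mul_sum]; exact Finset.sum_congr rfl (fun q _ => by ring)
        rw [this, hd2, ind_sum j j' (fun q => A p q)]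
      rw [Finset.sum_congr rfl (fun p _ => inner p), hd1,
        ind_sum i i' (fun p => A p j - A p j')]
    have e2 : ∑ p, ∑ q, (Real.log (γstar p q) + 1) * (d1 p * d2 q) =
        ∑ p, ∑ q, d1 p * d2 q * (Real.log (γstar p q) + 1) := by
      exact Finset.sum_congr rfl (fun p _ => Finset.sum_congr rfl (fun q _ => by ring))
    rw [e2, e1 M, e1 (fun p q => Real.log (γstar p q) + 1)] at h0
    have hlog := h0
    nlinarith [hlog]
  have hγstarΩ : γstar ∈ {γ : Matrix (Fin ns) (Fin nt) ℝ | (∀ i j, 0 ≤ γ i j) ∧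
      (∀ i, ∑ j, γ i j = μ i) ∧ (∀ j, ∑ i, γ i j = ν j)} := ⟨hpos0, hrow, hcol⟩
  constructor
  · -- STEP D: uniqueness
    intro γ' hγ' hmin'
    obtain ⟨hpos0', hrow', hcol'⟩ := hγ'
    by_contra hne2
    have hAB : ∃ a b, γ' a b ≠ γstar a b := by
      by_contra hc; push_neg at hc
      exact hne2 (Matrix.ext hc)
    obtain ⟨a, b, hab⟩ := hAB
    set mid : Matrix (Fin ns) (Fin nt) ℝ :=
      fun p q => (1/2 : ℝ) * γ' p q + (1/2 : ℝ) * γstar p q with hmid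
    have hmidΩ : mid ∈ {γ : Matrix (Fin ns) (Fin nt) ℝ | (∀ i j, 0 ≤ γ i j) ∧
        (∀ i, ∑ j, γ i j = μ i) ∧ (∀ j, ∑ i, γ i j = ν j)} := by
      refine ⟨fun p q => ?_, fun p => ?_, fun q => ?_⟩
      · have := hpos0' p q; have := hpos0 p q; positivity
      · rw [Finset.sum_add_distrib, ← Finset.mul_sum, ← Finset.mul_sum, hrow' p, hrow p]; ring
      · rw [Finset.sum_add_distrib, ← Finset.mul_sum, ← Finset.mul_sum, hcol' q, hcol q]; ring
    have hobjeq := le_antisymm (hmin' γstar hγstarΩ) (hmin γ' ⟨hpos0', hrow', hcol'⟩)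
    simp only at hobjeq
    have hentsum : ∑ i, ∑ j, mid i j * Real.log (mid i j) <
        (1/2 : ℝ) * (∑ i, ∑ j, γ' i j * Real.log (γ' i j)) +
        (1/2 : ℝ) * (∑ i, ∑ j, γstar i j * Real.log (γstar i j)) := by
      rw [← Finset.sum_product' (s := univ) (t := univ),
          ← Finset.sum_product' (s := univ) (t := univ),
          ← Finset.sum_product' (s := univ) (t := univ), Finset.mul_sum, Finset.mul_sum,
          ← Finset.sum_add_distrib]
      refine Finset.sum_lt_sum (fun p _ => ?_) ⟨(a, b), Finset.mem_univ _, ?_⟩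
      · exact mul_log_cvx (hpos0' p.1 p.2) (hpos0 p.1 p.2) (by norm_num) (by norm_num)
          (by norm_num)
      · exact mul_log_scvx (hpos0' a b) (hpos0 a b) hab (by norm_num) (by norm_num) (by norm_num)
    have hlinmid : ∑ i, ∑ j, mid i j * M i j =
        (1/2 : ℝ) * (∑ i, ∑ j, γ' i j * M i j) + (1/2 : ℝ) * (∑ i, ∑ j, γstar i j * M i j) := by
      simp [hmid, add_mul, Finset.sum_add_distrib, Finset.mul_sum, mul_assoc]
    have hcontra := hmin mid hmidΩ
    simp only at hcontra
    rw [hlinmid] at hcontra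
    have h6 := mul_lt_mul_of_pos_left hentsum hlam
    linarith [hcontra, hobjeq, h6]
  · -- STEP C: scaling form
    set A : Fin ns → Fin nt → ℝ := fun p q => M p q + lam * Real.log (γstar p q) with hA
    have hsplit : ∀ i j, A i j = A i j0 + (A i0 j - A i0 j0) := by
      intro i j
      have := hcyc i i0 j j0
      simp only [hA] at this ⊢
      linarith
    refine ⟨fun i => Real.exp (A i j0 / lam), fun j => Real.exp ((A i0 j - A i0 j0) / lam),
      fun i => Real.exp_pos _, fun j => Real.exp_pos _, fun i j => ?_⟩
    have hγ : γstar i j = Real.exp ((A i j - M i j) / lam) := by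
      rw [show (A i j - M i j)/lam = Real.log (γstar i j) by simp only [hA]; field_simp; ring]
      exact (Real.exp_log (hpos i j)).symm
    rw [hγ, hsplit i j, ← Real.exp_add, ← Real.exp_add]
    congr 1
    field_simp
    ring
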